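/- Let Σ be a multisigned complete graph on n ≥ 5 vertices in which all Hamiltonian cycles have the same multisign. Then any two triangles sharing an edge have the same multisign: if l, m, p, q are distinct vertices, then σ(△lmq) = σ(△lpq). -/

import Mathlib

/-- The multisign of the Hamiltonian cycle listed by the bijection `v`. -/
def hamMultisign {n m : ℕ} [NeZero n] (σ : Fin n → Fin n → (Fin m → ℤˣ))
    (v : Fin n → Fin n) : Fin m → ℤˣ :=
  ∏ k : Fin n, σ (v k) (v (k + 1))

/-- The multisign of the triangle on vertices `a`, `b`, `c`. -/
def triMultisign {n m : ℕ} (σ : Fin n → Fin n → (Fin m → ℤˣ))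
    (a b c : Fin n) : Fin m → ℤˣ :=
  σ a b * σ b c * σ c a

lemma exists_perm_five {n : ℕ} (i0 i1 i2 i3 i4 : Fin n) (a0 a1 a2 a3 a4 : Fin n)
    (h01 : i0 ≠ i1) (h02 : i0 ≠ i2) (h03 : i0 ≠ i3) (h04 : i0 ≠ i4)
    (h12 : i1 ≠ i2) (h13 : i1 ≠ i3) (h14 : i1 ≠ i4)
    (h23 : i2 ≠ i3) (h24 : i2 ≠ i4) (h34 : i3 ≠ i4)
    (g01 : a0 ≠ a1) (g02 : a0 ≠ a2) (g03 : a0 ≠ a3) (g04 : a0 ≠ a4)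
    (g12 : a1 ≠ a2) (g13 : a1 ≠ a3) (g14 : a1 ≠ a4)
    (g23 : a2 ≠ a3) (g24 : a2 ≠ a4) (g34 : a3 ≠ a4) :
    ∃ v : Fin n → Fin n, Function.Bijective v ∧
      v i0 = a0 ∧ v i1 = a1 ∧ v i2 = a2 ∧ v i3 = a3 ∧ v i4 = a4 := by
  classical
  set f : Fin n → Fin n := fun k =>
    if k = i0 then a0 else if k = i1 then a1 else if k = i2 then a2
      else if k = i3 then a3 else a4 with hf
  have hf0 : f i0 = a0 := by simp [hf]
  have hf1 : f i1 = a1 := by simp [hf, h01.symm]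
  have hf2 : f i2 = a2 := by simp [hf, h02.symm, h12.symm]
  have hf3 : f i3 = a3 := by simp [hf, h03.symm, h13.symm, h23.symm]
  have hf4 : f i4 = a4 := by simp [hf, h04.symm, h14.symm, h24.symm, h34.symm]
  have hcard : Fintype.card (Fin n) = (Finset.univ : Finset (Fin n)).card := by simp
  have hinj : Set.InjOn f ({i0, i1, i2, i3, i4} : Finset (Fin n)) := by
    intro x hx y hy hxy
    simp only [Finset.coe_insert, Set.mem_insert_iff, Finset.coe_singleton,
      Set.mem_singleton_iff] at hx hy
    rcases hx with rfl | rfl | rfl | rfl | rfl <;>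
      rcases hy with rfl | rfl | rfl | rfl | rfl <;>
      simp only [hf0, hf1, hf2, hf3, hf4] at hxy <;>
      simp_all
  obtain ⟨g, hg⟩ := Finset.exists_equiv_extend_of_card_eq hcard
    (Finset.subset_univ _) hinj
  refine ⟨fun k => (g k : Fin n), ?_, ?_, ?_, ?_, ?_, ?_⟩
  · exact (g.trans (Equiv.subtypeUnivEquiv (fun x => Finset.mem_univ x))).bijective
  · exact (hg i0 (by simp)).trans hf0
  · exact (hg i1 (by simp)).trans hf1
  · exact (hg i2 (by simp)).trans hf2
  · exact (hg i3 (by simp)).trans hf3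
  · exact (hg i4 (by simp)).trans hf4

lemma prod_four {n m : ℕ} [NeZero n] (σ : Fin n → Fin n → (Fin m → ℤˣ))
    (u w : Fin n → Fin n) (k0 k1 k2 k3 : Fin n)
    (h01 : k0 ≠ k1) (h02 : k0 ≠ k2) (h03 : k0 ≠ k3)
    (h12 : k1 ≠ k2) (h13 : k1 ≠ k3) (h23 : k2 ≠ k3)
    (heq : ∀ k, k ≠ k0 → k ≠ k1 → k ≠ k2 → k ≠ k3 →
      σ (u k) (u (k+1)) = σ (w k) (w (k+1)))
    (h : hamMultisign σ u = hamMultisign σ w) :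
    σ (u k0) (u (k0+1)) * σ (u k1) (u (k1+1)) * σ (u k2) (u (k2+1)) * σ (u k3) (u (k3+1)) =
    σ (w k0) (w (k0+1)) * σ (w k1) (w (k1+1)) * σ (w k2) (w (k2+1)) * σ (w k3) (w (k3+1)) := by
  classical
  set S : Finset (Fin n) := {k0, k1, k2, k3} with hS
  have hc : ∏ k ∈ Sᶜ, σ (u k) (u (k+1)) = ∏ k ∈ Sᶜ, σ (w k) (w (k+1)) := by
    refine Finset.prod_congr rfl fun k hk => ?_
    simp only [hS, Finset.mem_compl, Finset.mem_insert, Finset.mem_singleton, not_or] at hk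
    exact heq k hk.1 hk.2.1 hk.2.2.1 hk.2.2.2
  have hu := Finset.prod_mul_prod_compl S (fun k => σ (u k) (u (k+1)))
  have hw := Finset.prod_mul_prod_compl S (fun k => σ (w k) (w (k+1)))
  have hS4 : ∏ k ∈ S, σ (u k) (u (k+1)) = ∏ k ∈ S, σ (w k) (w (k+1)) := by
    have : (∏ k ∈ S, σ (u k) (u (k+1))) * ∏ k ∈ Sᶜ, σ (u k) (u (k+1)) =
        (∏ k ∈ S, σ (w k) (w (k+1))) * ∏ k ∈ Sᶜ, σ (w k) (w (k+1)) := by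
      rw [hu, hw]; exact h
    rw [hc] at this
    exact mul_right_cancel this
  have hmem1 : k0 ∉ ({k1, k2, k3} : Finset (Fin n)) := by simp [h01, h02, h03]
  have hmem2 : k1 ∉ ({k2, k3} : Finset (Fin n)) := by simp [h12, h13]
  have hmem3 : k2 ∉ ({k3} : Finset (Fin n)) := by simp [h23]
  rw [hS] at hS4
  simp only [Finset.prod_insert hmem1, Finset.prod_insert hmem2, Finset.prod_insert hmem3,
    Finset.prod_singleton] at hS4
  rw [mul_assoc, mul_assoc, mul_assoc, mul_assoc]
  exact hS4

/-- If all Hamiltonian cycles have the same multisign, then two triangles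
sharing an edge have the same multisign. -/
theorem triangles_sharing_edge_same_multisign (n m : ℕ) (hn : 5 ≤ n) [NeZero n]
    (σ : Fin n → Fin n → (Fin m → ℤˣ))
    (hsym : ∀ a b, σ a b = σ b a)
    (hham : ∀ v w : Fin n → Fin n, Function.Bijective v → Function.Bijective w →
      hamMultisign σ v = hamMultisign σ w)
    (l m' p q : Fin n)
    (hlm : l ≠ m') (hlp : l ≠ p) (hlq : l ≠ q)
    (hmp : m' ≠ p) (hmq : m' ≠ q) (hpq : p ≠ q) :
    triMultisign σ l m' q = triMultisign σ l p q := by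
  classical
  -- a fifth vertex
  obtain ⟨t, ht⟩ : ∃ t : Fin n, t ∉ ({l, m', p, q} : Finset (Fin n)) := by
    by_contra hcon
    push_neg at hcon
    have hsub : (Finset.univ : Finset (Fin n)) ⊆ {l, m', p, q} := fun t _ => hcon t
    have h1 := Finset.card_le_card hsub
    have h2 : ({l, m', p, q} : Finset (Fin n)).card ≤ 4 := by
      have a1 := Finset.card_insert_le l ({m', p, q} : Finset (Fin n))
      have a2 := Finset.card_insert_le m' ({p, q} : Finset (Fin n))
      have a3 := Finset.card_insert_le p ({q} : Finset (Fin n))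
      have a4 : ({q} : Finset (Fin n)).card = 1 := Finset.card_singleton q
      omega
    rw [Finset.card_univ, Fintype.card_fin] at h1
    omega
  simp only [Finset.mem_insert, Finset.mem_singleton, not_or] at ht
  obtain ⟨htl, htm, htp, htq⟩ := ht
  -- indices
  let i0 : Fin n := ⟨0, by omega⟩
  let i1 : Fin n := ⟨1, by omega⟩
  let i2 : Fin n := ⟨2, by omega⟩
  let i3 : Fin n := ⟨3, by omega⟩
  let i4 : Fin n := ⟨4, by omega⟩
  let iN : Fin n := ⟨n - 1, by omega⟩
  have h1val : (1 : Fin n).val = 1 := by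
    rw [Fin.val_one']; exact Nat.mod_eq_of_lt (by omega)
  have hsucc : ∀ a : ℕ, ∀ h : a < n, ∀ h' : a + 1 < n,
      (⟨a, h⟩ : Fin n) + 1 = ⟨a + 1, h'⟩ := by
    intro a h h'
    apply Fin.ext
    rw [Fin.add_def]
    simp only [h1val]
    exact Nat.mod_eq_of_lt h'
  have s0 : i0 + 1 = i1 := hsucc 0 (by omega) (by omega)
  have s1 : i1 + 1 = i2 := hsucc 1 (by omega) (by omega)
  have s2 : i2 + 1 = i3 := hsucc 2 (by omega) (by omega)
  have s3 : i3 + 1 = i4 := hsucc 3 (by omega) (by omega)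
  have sN : iN + 1 = i0 := by
    apply Fin.ext
    rw [Fin.add_def]
    simp only [h1val]
    show (n - 1 + 1) % n = 0
    have : n - 1 + 1 = n := by omega
    rw [this, Nat.mod_self]
  -- distinctness of indices
  have d01 : i0 ≠ i1 := by simp [i0, i1, Fin.ext_iff]
  have d02 : i0 ≠ i2 := by simp [i0, i2, Fin.ext_iff]
  have d03 : i0 ≠ i3 := by simp [i0, i3, Fin.ext_iff]
  have d04 : i0 ≠ i4 := by simp [i0, i4, Fin.ext_iff]
  have d12 : i1 ≠ i2 := by simp [i1, i2, Fin.ext_iff]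
  have d13 : i1 ≠ i3 := by simp [i1, i3, Fin.ext_iff]
  have d14 : i1 ≠ i4 := by simp [i1, i4, Fin.ext_iff]
  have d23 : i2 ≠ i3 := by simp [i2, i3, Fin.ext_iff]
  have d24 : i2 ≠ i4 := by simp [i2, i4, Fin.ext_iff]
  have d34 : i3 ≠ i4 := by simp [i3, i4, Fin.ext_iff]
  have dN0 : iN ≠ i0 := by simp [iN, i0, Fin.ext_iff]; omega
  have dN1 : iN ≠ i1 := by simp [iN, i1, Fin.ext_iff]; omega
  have dN2 : iN ≠ i2 := by simp [iN, i2, Fin.ext_iff]; omega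
  have dN3 : iN ≠ i3 := by simp [iN, i3, Fin.ext_iff]; omega
  -- first Hamiltonian cycle : l, m', q, p, t, ...
  obtain ⟨v0, hb0, hv00, hv01, hv02, hv03, hv04⟩ :=
    exists_perm_five i0 i1 i2 i3 i4 l m' q p t
      d01 d02 d03 d04 d12 d13 d14 d23 d24 d34
      hlm hlq hlp (Ne.symm htl) hmq hmp (Ne.symm htm) (Ne.symm hpq) (Ne.symm htq) (Ne.symm htp)
  -- second Hamiltonian cycle : p, l, m', q, ..., t
  obtain ⟨v1, hb1, hv10, hv11, hv12, hv13, hv1N⟩ :=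
    exists_perm_five i0 i1 i2 i3 iN p l m' q t
      d01 d02 d03 dN0.symm d12 d13 dN1.symm d23 dN2.symm dN3.symm
      (Ne.symm hlp) (Ne.symm hmp) hpq (Ne.symm htp) hlm hlq (Ne.symm htl) hmq (Ne.symm htm) (Ne.symm htq)
  -- the swapped cycles
  set w0 : Fin n → Fin n := fun k => v0 (Equiv.swap i1 i3 k) with hw0def
  set w1 : Fin n → Fin n := fun k => v1 (Equiv.swap i0 i2 k) with hw1def
  have hbw0 : Function.Bijective w0 := hb0.comp (Equiv.swap i1 i3).bijective
  have hbw1 : Function.Bijective w1 := hb1.comp (Equiv.swap i0 i2).bijective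
  -- values of w0
  have hw00 : w0 i0 = l := by
    rw [hw0def]; simp only []
    rw [Equiv.swap_apply_of_ne_of_ne d01 d03, hv00]
  have hw01 : w0 i1 = p := by
    rw [hw0def]; simp only []
    rw [Equiv.swap_apply_left, hv03]
  have hw02 : w0 i2 = q := by
    rw [hw0def]; simp only []
    rw [Equiv.swap_apply_of_ne_of_ne (Ne.symm d12) d23, hv02]
  have hw03 : w0 i3 = m' := by
    rw [hw0def]; simp only []
    rw [Equiv.swap_apply_right, hv01]
  have hw04 : w0 i4 = t := by
    rw [hw0def]; simp only []
    rw [Equiv.swap_apply_of_ne_of_ne (Ne.symm d14) (Ne.symm d34), hv04]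
  -- values of w1
  have hw10 : w1 i0 = m' := by
    rw [hw1def]; simp only []
    rw [Equiv.swap_apply_left, hv12]
  have hw11 : w1 i1 = l := by
    rw [hw1def]; simp only []
    rw [Equiv.swap_apply_of_ne_of_ne (Ne.symm d01) d12, hv11]
  have hw12 : w1 i2 = p := by
    rw [hw1def]; simp only []
    rw [Equiv.swap_apply_right, hv10]
  have hw13 : w1 i3 = q := by
    rw [hw1def]; simp only []
    rw [Equiv.swap_apply_of_ne_of_ne (Ne.symm d03) (Ne.symm d23), hv13]
  have hw1N : w1 iN = t := by
    rw [hw1def]; simp only []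
    rw [Equiv.swap_apply_of_ne_of_ne dN0 dN2, hv1N]
  -- first relation
  have A : σ l m' * σ m' q * σ q p * σ p t
      = σ l p * σ p q * σ q m' * σ m' t := by
    have heq0 : ∀ k, k ≠ i0 → k ≠ i1 → k ≠ i2 → k ≠ i3 →
        σ (v0 k) (v0 (k+1)) = σ (w0 k) (w0 (k+1)) := by
      intro k hk0 hk1 hk2 hk3
      have e1 : Equiv.swap i1 i3 k = k := Equiv.swap_apply_of_ne_of_ne hk1 hk3
      have e2 : Equiv.swap i1 i3 (k+1) = k+1 := by
        apply Equiv.swap_apply_of_ne_of_ne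
        · intro hcon
          exact hk0 (add_right_cancel (hcon.trans s0.symm))
        · intro hcon
          exact hk2 (add_right_cancel (hcon.trans s2.symm))
      rw [hw0def]; simp only []
      rw [e1, e2]
    have H := prod_four σ v0 w0 i0 i1 i2 i3 d01 d02 d03 d12 d13 d23 heq0
      (hham v0 w0 hb0 hbw0)
    rw [s0, s1, s2, s3, hv00, hv01, hv02, hv03, hv04,
      hw00, hw01, hw02, hw03, hw04] at H
    exact H
  -- second relation
  have A' : σ p t * σ p l * σ l m' * σ m' q
      = σ m' t * σ m' l * σ l p * σ p q := by
    have heq1 : ∀ k, k ≠ iN → k ≠ i0 → k ≠ i1 → k ≠ i2 →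
        σ (v1 k) (v1 (k+1)) = σ (w1 k) (w1 (k+1)) := by
      intro k hkN hk0 hk1 hk2
      have e1 : Equiv.swap i0 i2 k = k := Equiv.swap_apply_of_ne_of_ne hk0 hk2
      have e2 : Equiv.swap i0 i2 (k+1) = k+1 := by
        apply Equiv.swap_apply_of_ne_of_ne
        · intro hcon
          exact hkN (add_right_cancel (hcon.trans sN.symm))
        · intro hcon
          exact hk1 (add_right_cancel (hcon.trans s1.symm))
      rw [hw1def]; simp only []
      rw [e1, e2]
    have H := prod_four σ v1 w1 iN i0 i1 i2 dN0 dN1 dN2 d01 d02 d12 heq1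
      (hham v1 w1 hb1 hbw1)
    rw [sN, s0, s1, s2, hv10, hv11, hv12, hv13, hv1N,
      hw10, hw11, hw12, hw13, hw1N] at H
    rw [hsym t p, hsym t m'] at H
    exact H
  -- combine
  have hsq : ∀ x : Fin m → ℤˣ, x * x = 1 := by
    intro x; funext i; exact Int.units_mul_self (x i)
  have key : σ q p * σ p l = σ q m' * σ m' l := by
    calc σ q p * σ p l
        = (σ l m' * σ l m') * ((σ m' q * σ m' q) * ((σ p t * σ p t) * (σ q p * σ p l))) := by
          rw [hsq, hsq, hsq, one_mul, one_mul, one_mul]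
      _ = (σ l m' * σ m' q * σ q p * σ p t) * (σ p t * σ p l * σ l m' * σ m' q) := by ac_rfl
      _ = (σ l p * σ p q * σ q m' * σ m' t) * (σ m' t * σ m' l * σ l p * σ p q) := by
          rw [A, A']
      _ = (σ l p * σ l p) * ((σ p q * σ p q) * ((σ m' t * σ m' t) * (σ q m' * σ m' l))) := by
          ac_rfl
      _ = σ q m' * σ m' l := by rw [hsq, hsq, hsq, one_mul, one_mul, one_mul]
  rw [hsym q p, hsym p l, hsym q m', hsym m' l] at key
  show σ l m' * σ m' q * σ q l = σ l p * σ p q * σ q l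
  calc σ l m' * σ m' q * σ q l = (σ m' q * σ l m') * σ q l := by ac_rfl
    _ = (σ p q * σ l p) * σ q l := by rw [key]
    _ = σ l p * σ p q * σ q l := by ac_rfl
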